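/- Let F be a finite field of odd cardinality q with quadratic character χ, and for m ∈ F define S_m(x,y) = χ(x)·χ(m·x+y). For any two distinct m₁, m₂ ∈ F and any shift (u,v) ∈ F × F, the periodic cross-correlation |∑_{x,y ∈ F} S_{m₁}(x,y)·S_{m₂}(x+u, y+v)| ≤ q + 1. -/

import Mathlib

open Finset

lemma qc_abs_le_one (F : Type*) [Field F] [Fintype F] [DecidableEq F] (a : F) :
    |(quadraticChar F a : ℤ)| ≤ 1 := by
  by_cases ha : a = 0
  · simp [ha, quadraticChar_zero]
  · have h := quadraticChar_sq_one ha
    nlinarith [abs_nonneg (quadraticChar F a : ℤ), sq_abs (quadraticChar F a : ℤ)]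

lemma qc_shift_sum (F : Type*) [Field F] [Fintype F] [DecidableEq F]
    (hF : ringChar F ≠ 2) {c : F} (hc : c ≠ 0) :
    ∑ y : F, (quadraticChar F y : ℤ) * quadraticChar F (y + c) = -1 := by
  classical
  have h1 : ∑ y : F, (quadraticChar F y : ℤ) * quadraticChar F (y + c)
      = ∑ y ∈ univ.erase (0 : F),
          (quadraticChar F y : ℤ) * quadraticChar F (y + c) := by
    rw [Finset.sum_erase_eq_sub (mem_univ (0 : F))]
    simp [quadraticChar_zero]
  have h2 : ∀ y : F, y ≠ 0 →
      (quadraticChar F y : ℤ) * quadraticChar F (y + c)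
        = quadraticChar F (1 + c * y⁻¹) := by
    intro y hy
    have hyc : y + c = y * (1 + c * y⁻¹) := by field_simp
    rw [hyc, map_mul, ← mul_assoc, ← sq, quadraticChar_sq_one hy, one_mul]
  have h3 : ∑ y ∈ univ.erase (0 : F),
      (quadraticChar F y : ℤ) * quadraticChar F (y + c)
      = ∑ z ∈ univ.erase (1 : F), (quadraticChar F z : ℤ) := by
    apply Finset.sum_nbij' (fun y => 1 + c * y⁻¹) (fun z => c / (z - 1))
    · intro y hy
      simp only [mem_erase, mem_univ, and_true] at hy ⊢
      intro h
      apply hy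
      have : c * y⁻¹ = 0 := by linear_combination h
      rcases mul_eq_zero.1 this with h' | h'
      · exact absurd h' hc
      · exact inv_eq_zero.1 h'
    · intro z hz
      simp only [mem_erase, mem_univ, and_true] at hz ⊢
      exact div_ne_zero hc (sub_ne_zero.2 hz)
    · intro y hy
      simp only [mem_erase, mem_univ, and_true] at hy
      field_simp
      simp [hc]
    · intro z hz
      simp only [mem_erase, mem_univ, and_true] at hz
      have h1 : z - 1 ≠ 0 := sub_ne_zero.2 hz
      field_simp
      ring
    · intro y hy
      simp only [mem_erase, mem_univ, and_true] at hy
      exact h2 y hy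
  rw [h1, h3, Finset.sum_erase_eq_sub (mem_univ (1 : F)), quadraticChar_sum_zero hF]
  simp

theorem circulant_legendre_crosscorrelation_bound
    (F : Type*) [Field F] [Fintype F] [DecidableEq F]
    (hodd : Odd (Fintype.card F))
    (χ : F → ℤ) (hχ : ∀ x, χ x = quadraticChar F x)
    (S : F → F × F → ℤ) (hS : ∀ m x y, S m (x, y) = χ x * χ (m * x + y))
    (m₁ m₂ : F) (hm : m₁ ≠ m₂) (u v : F) :
    |∑ x : F, ∑ y : F, S m₁ (x, y) * S m₂ (x + u, y + v)| ≤ (Fintype.card F : ℤ) + 1 := by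
  classical
  have hF : ringChar F ≠ 2 := by
    intro h
    have h1 := FiniteField.even_card_iff_char_two.mp h
    have h2 := Nat.odd_iff.mp hodd
    omega
  set q : ℤ := (Fintype.card F : ℤ) with hq
  have hq1 : 1 ≤ q := by
    have h := Fintype.card_pos (α := F)
    rw [hq]
    exact_mod_cast h
  set T : F → ℤ := fun c => ∑ z : F, (quadraticChar F z : ℤ) * quadraticChar F (z + c) with hT
  have hT0 : T 0 = q - 1 := by
    have e1 : T 0 = ∑ z ∈ univ.erase (0 : F),
        (quadraticChar F z : ℤ) * quadraticChar F (z + 0) := by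
      simp only [hT]
      rw [Finset.sum_erase_eq_sub (mem_univ (0 : F))]
      simp [quadraticChar_zero]
    have e2 : ∑ z ∈ univ.erase (0 : F),
        (quadraticChar F z : ℤ) * quadraticChar F (z + 0)
        = ∑ _z ∈ univ.erase (0 : F), (1 : ℤ) := by
      apply Finset.sum_congr rfl
      intro z hz
      simp only [mem_erase, mem_univ, and_true] at hz
      rw [add_zero, ← sq, quadraticChar_sq_one hz]
    rw [e1, e2]
    simp only [Finset.sum_const, nsmul_eq_mul, mul_one]
    rw [Finset.card_erase_of_mem (mem_univ (0 : F)), Finset.card_univ]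
    have h := Fintype.card_pos (α := F)
    rw [hq]
    push_cast [Nat.cast_sub h]
    ring
  have hTne : ∀ c : F, c ≠ 0 → T c = -1 := fun c hc => qc_shift_sum F hF hc
  have hinner : ∀ x : F, ∑ y : F, S m₁ (x, y) * S m₂ (x + u, y + v)
      = (quadraticChar F x : ℤ) * quadraticChar F (x + u)
        * T ((m₂ - m₁) * x + (m₂ * u + v)) := by
    intro x
    have e : ∑ y : F, S m₁ (x, y) * S m₂ (x + u, y + v)
        = (quadraticChar F x : ℤ) * quadraticChar F (x + u)
          * ∑ y : F, (quadraticChar F (m₁ * x + y) : ℤ)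
             * quadraticChar F ((m₁ * x + y) + ((m₂ - m₁) * x + (m₂ * u + v))) := by
      rw [Finset.mul_sum]
      apply Finset.sum_congr rfl
      intro y _
      rw [hS, hS, hχ, hχ, hχ, hχ]
      have harg : m₂ * (x + u) + (y + v) = (m₁ * x + y) + ((m₂ - m₁) * x + (m₂ * u + v)) := by
        ring
      rw [harg]
      ring
    rw [e]
    simp only [hT]
    congr 1
    exact Fintype.sum_equiv (Equiv.addLeft (m₁ * x)) _ _ (fun y => by simp [Equiv.addLeft])
  have hmm : m₂ - m₁ ≠ 0 := sub_ne_zero.2 (Ne.symm hm)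
  set x₀ : F := -(m₂ * u + v) / (m₂ - m₁) with hx₀
  have hcx₀ : (m₂ - m₁) * x₀ + (m₂ * u + v) = 0 := by
    rw [hx₀]
    field_simp
    ring
  have hcx : ∀ x : F, x ≠ x₀ → (m₂ - m₁) * x + (m₂ * u + v) ≠ 0 := by
    intro x hx h
    apply hx
    rw [hx₀, eq_div_iff hmm]
    linear_combination h
  set ε : ℤ := (quadraticChar F x₀ : ℤ) * quadraticChar F (x₀ + u) with hε
  have hTu : T u = ε + ∑ x ∈ univ.erase x₀,
      (quadraticChar F x : ℤ) * quadraticChar F (x + u) := by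
    simp only [hT, hε]
    rw [Finset.sum_erase_eq_sub (f := fun x : F =>
      (quadraticChar F x : ℤ) * quadraticChar F (x + u)) (mem_univ x₀)]
    ring
  have htotal : ∑ x : F, ∑ y : F, S m₁ (x, y) * S m₂ (x + u, y + v) = ε * q - T u := by
    calc ∑ x : F, ∑ y : F, S m₁ (x, y) * S m₂ (x + u, y + v)
        = ∑ x : F, (quadraticChar F x : ℤ) * quadraticChar F (x + u)
            * T ((m₂ - m₁) * x + (m₂ * u + v)) := Finset.sum_congr rfl (fun x _ => hinner x)
      _ = ε * T ((m₂ - m₁) * x₀ + (m₂ * u + v))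
          + ∑ x ∈ univ.erase x₀, (quadraticChar F x : ℤ) * quadraticChar F (x + u)
              * T ((m₂ - m₁) * x + (m₂ * u + v)) := by
            rw [← Finset.add_sum_erase _ _ (mem_univ x₀), hε]
      _ = ε * (q - 1) + ∑ x ∈ univ.erase x₀,
            (quadraticChar F x : ℤ) * quadraticChar F (x + u) * (-1) := by
            rw [hcx₀, hT0]
            congr 1
            exact Finset.sum_congr rfl fun x hx => by
              rw [hTne _ (hcx x (Finset.ne_of_mem_erase hx))]
      _ = ε * (q - 1) - ∑ x ∈ univ.erase x₀,
            (quadraticChar F x : ℤ) * quadraticChar F (x + u) := by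
            simp [mul_neg_one, sub_eq_add_neg]
      _ = ε * q - T u := by rw [hTu]; ring
  rw [htotal]
  have hεabs : |ε| ≤ 1 := by
    rw [hε]
    calc |(quadraticChar F x₀ : ℤ) * quadraticChar F (x₀ + u)|
        = |(quadraticChar F x₀ : ℤ)| * |(quadraticChar F (x₀ + u) : ℤ)| := abs_mul _ _
      _ ≤ 1 * 1 := mul_le_mul (qc_abs_le_one F x₀) (qc_abs_le_one F (x₀ + u))
          (abs_nonneg _) zero_le_one
      _ = 1 := one_mul 1
  by_cases hu : u = 0
  · subst hu
    rw [hT0]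
    have hε0 : 0 ≤ ε := by rw [hε, add_zero]; exact mul_self_nonneg _
    rw [abs_le]
    rcases abs_le.1 hεabs with ⟨h1, h2⟩
    constructor <;> nlinarith
  · rw [hTne u hu]
    rw [abs_le]
    rcases abs_le.1 hεabs with ⟨h1, h2⟩
    constructor <;> nlinarith
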